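/- arXiv:2505.12387 — 2 statements merged into one kernel-verified Lean document; each statement's English description precedes it below -/
import Mathlib

section
/- If ℓ(x, W, U) = ℓ̃(x, WU) and (W, U) is a local minimum of the entropic loss with γ = 0, then E[G_Wᵀ G_W] = E[G_U G_Uᵀ]; with η = 0 and γ > 0 instead, WᵀW = U Uᵀ, so weights of the two factors are balanced. -/
open Matrix Finset

/-- Entrywise product of two rectangular arrays, `(W·U)_{ab} = Σ_t W_{at} U_{tb}`. -/
def matmulF {m k n : ℕ} (W : Fin m → Fin k → ℝ) (U : Fin k → Fin n → ℝ) :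
    Fin m → Fin n → ℝ :=
  fun a b => ∑ t, W a t * U t b

/-- Gradient of the per-sample loss `ℓ̃(x, WU)` with respect to `W`. -/
noncomputable def gradW {m k n : ℕ} {X : Type}
    (ℓ : X → (Fin m → Fin n → ℝ) → ℝ) (x : X)
    (W : Fin m → Fin k → ℝ) (U : Fin k → Fin n → ℝ) : Fin m → Fin k → ℝ :=
  fun a b => fderiv ℝ
    (fun p : (Fin m → Fin k → ℝ) × (Fin k → Fin n → ℝ) => ℓ x (matmulF p.1 p.2))
    (W, U) (Pi.single a (Pi.single b 1), 0)

/-- Gradient of the per-sample loss `ℓ̃(x, WU)` with respect to `U`. -/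
noncomputable def gradU {m k n : ℕ} {X : Type}
    (ℓ : X → (Fin m → Fin n → ℝ) → ℝ) (x : X)
    (W : Fin m → Fin k → ℝ) (U : Fin k → Fin n → ℝ) : Fin k → Fin n → ℝ :=
  fun a b => fderiv ℝ
    (fun p : (Fin m → Fin k → ℝ) × (Fin k → Fin n → ℝ) => ℓ x (matmulF p.1 p.2))
    (W, U) (0, Pi.single a (Pi.single b 1))

section Aux
variable {m k n : ℕ} {X : Type}

lemma matmulF_add_left (W W' : Fin m → Fin k → ℝ) (U : Fin k → Fin n → ℝ) :
    matmulF (W + W') U = matmulF W U + matmulF W' U := by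
  funext a b; simp [matmulF, add_mul, Finset.sum_add_distrib]

lemma matmulF_smul_left (t : ℝ) (W : Fin m → Fin k → ℝ) (U : Fin k → Fin n → ℝ) :
    matmulF (t • W) U = t • matmulF W U := by
  funext a b; simp [matmulF, Finset.mul_sum, mul_assoc]

lemma matmulF_add_right (W : Fin m → Fin k → ℝ) (U U' : Fin k → Fin n → ℝ) :
    matmulF W (U + U') = matmulF W U + matmulF W U' := by
  funext a b; simp [matmulF, mul_add, Finset.sum_add_distrib]

lemma matmulF_smul_right (t : ℝ) (W : Fin m → Fin k → ℝ) (U : Fin k → Fin n → ℝ) :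
    matmulF W (t • U) = t • matmulF W U := by
  funext a b; simp only [matmulF, Pi.smul_apply, smul_eq_mul, Finset.mul_sum]; exact Finset.sum_congr rfl fun i _ => by ring

lemma differentiable_mm :
    Differentiable ℝ (fun p : (Fin m → Fin k → ℝ) × (Fin k → Fin n → ℝ) =>
      matmulF p.1 p.2) := by
  unfold matmulF
  apply differentiable_pi.2; intro a; apply differentiable_pi.2; intro b
  apply Differentiable.fun_sum; intro t _
  fun_prop

lemma matmulF_single_left (a : Fin m) (b : Fin k) (U : Fin k → Fin n → ℝ) :
    matmulF (Pi.single a (Pi.single b 1)) U = Pi.single a (U b) := by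
  funext r c
  by_cases h : r = a <;>
    simp [matmulF, Pi.single_apply, h, ite_mul, Finset.sum_ite_eq]

end Aux

section Grad
variable {m k n : ℕ} {X : Type}
variable (ℓ : X → (Fin m → Fin n → ℝ) → ℝ)

lemma gradW_eq (hℓ : ∀ x, ContDiff ℝ 2 (ℓ x)) (x : X) (W : Fin m → Fin k → ℝ) (U : Fin k → Fin n → ℝ)
    (a : Fin m) (b : Fin k) :
    gradW ℓ x W U a b = fderiv ℝ (ℓ x) (matmulF W U) (Pi.single a (U b)) := by
  have hde : DifferentiableAt ℝ (ℓ x) (matmulF W U) :=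
    ((hℓ x).differentiable (by norm_num)) _
  have hφ : DifferentiableAt ℝ
      (fun p : (Fin m → Fin k → ℝ) × (Fin k → Fin n → ℝ) => ℓ x (matmulF p.1 p.2))
      (W, U) :=
    DifferentiableAt.comp _ hde differentiable_mm.differentiableAt
  set E : Fin m → Fin k → ℝ := Pi.single a (Pi.single b 1) with hE
  have hline : HasDerivAt
      (fun t : ℝ => ((W, U) + t • ((E, 0) : (Fin m → Fin k → ℝ) × (Fin k → Fin n → ℝ))))
      ((E, (0 : Fin k → Fin n → ℝ))) 0 := by
    simpa using ((hasDerivAt_id (0 : ℝ)).smul_const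
      ((E, (0 : Fin k → Fin n → ℝ)))).const_add (W, U)
  have h1 : HasDerivAt (fun t : ℝ => ℓ x (matmulF (W + t • E) U)) (gradW ℓ x W U a b) 0 := by
    have hφ' : HasFDerivAt
        (fun p : (Fin m → Fin k → ℝ) × (Fin k → Fin n → ℝ) => ℓ x (matmulF p.1 p.2))
        (fderiv ℝ (fun p : (Fin m → Fin k → ℝ) × (Fin k → Fin n → ℝ) =>
          ℓ x (matmulF p.1 p.2)) (W, U))
        ((W, U) + (0:ℝ) • ((E, 0) : (Fin m → Fin k → ℝ) × (Fin k → Fin n → ℝ))) := by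
      simpa using hφ.hasFDerivAt
    have := hφ'.comp_hasDerivAt 0 hline
    have heq : ((fun p : (Fin m → Fin k → ℝ) × (Fin k → Fin n → ℝ) =>
        ℓ x (matmulF p.1 p.2)) ∘ fun t : ℝ =>
          (W, U) + t • ((E, 0) : (Fin m → Fin k → ℝ) × (Fin k → Fin n → ℝ))) =
        (fun t : ℝ => ℓ x (matmulF (W + t • E) U)) := by
      funext t; simp [Function.comp]
    rw [heq] at this
    exact this
  have hline2 : HasDerivAt (fun t : ℝ => matmulF W U + t • matmulF E U) (matmulF E U) 0 := by
    simpa using ((hasDerivAt_id (0 : ℝ)).smul_const (matmulF E U)).const_add (matmulF W U)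
  have h2 : HasDerivAt (fun t : ℝ => ℓ x (matmulF (W + t • E) U))
      (fderiv ℝ (ℓ x) (matmulF W U) (matmulF E U)) 0 := by
    have hde' : HasFDerivAt (ℓ x) (fderiv ℝ (ℓ x) (matmulF W U))
        (matmulF W U + (0:ℝ) • matmulF E U) := by simpa using hde.hasFDerivAt
    have := hde'.comp_hasDerivAt 0 hline2
    have heq : (fun t : ℝ => ℓ x (matmulF (W + t • E) U)) =
        ((ℓ x) ∘ fun t : ℝ => matmulF W U + t • matmulF E U) := by
      funext t; simp only [Function.comp_apply]
      rw [matmulF_add_left, matmulF_smul_left]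
    rw [heq]
    exact this
  have := h1.unique h2
  rw [this, matmulF_single_left]

lemma gradU_eq (hℓ : ∀ x, ContDiff ℝ 2 (ℓ x)) (x : X) (W : Fin m → Fin k → ℝ) (U : Fin k → Fin n → ℝ)
    (a : Fin k) (b : Fin n) :
    gradU ℓ x W U a b = fderiv ℝ (ℓ x) (matmulF W U)
      (fun r c => W r a * (Pi.single b 1 : Fin n → ℝ) c) := by
  have hde : DifferentiableAt ℝ (ℓ x) (matmulF W U) :=
    ((hℓ x).differentiable (by norm_num)) _
  have hφ : DifferentiableAt ℝ
      (fun p : (Fin m → Fin k → ℝ) × (Fin k → Fin n → ℝ) => ℓ x (matmulF p.1 p.2))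
      (W, U) :=
    DifferentiableAt.comp _ hde differentiable_mm.differentiableAt
  set E : Fin k → Fin n → ℝ := Pi.single a (Pi.single b 1) with hE
  have hline : HasDerivAt
      (fun t : ℝ => ((W, U) + t • (((0 : Fin m → Fin k → ℝ), E))))
      (((0 : Fin m → Fin k → ℝ), E)) 0 := by
    simpa using ((hasDerivAt_id (0 : ℝ)).smul_const
      (((0 : Fin m → Fin k → ℝ), E))).const_add (W, U)
  have h1 : HasDerivAt (fun t : ℝ => ℓ x (matmulF W (U + t • E))) (gradU ℓ x W U a b) 0 := by
    have hφ' : HasFDerivAt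
        (fun p : (Fin m → Fin k → ℝ) × (Fin k → Fin n → ℝ) => ℓ x (matmulF p.1 p.2))
        (fderiv ℝ (fun p : (Fin m → Fin k → ℝ) × (Fin k → Fin n → ℝ) =>
          ℓ x (matmulF p.1 p.2)) (W, U))
        ((W, U) + (0:ℝ) • (((0 : Fin m → Fin k → ℝ), E))) := by
      simpa using hφ.hasFDerivAt
    have := hφ'.comp_hasDerivAt 0 hline
    have heq : ((fun p : (Fin m → Fin k → ℝ) × (Fin k → Fin n → ℝ) =>
        ℓ x (matmulF p.1 p.2)) ∘ fun t : ℝ =>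
          (W, U) + t • (((0 : Fin m → Fin k → ℝ), E))) =
        (fun t : ℝ => ℓ x (matmulF W (U + t • E))) := by
      funext t; simp [Function.comp]
    rw [heq] at this
    exact this
  have hline2 : HasDerivAt (fun t : ℝ => matmulF W U + t • matmulF W E) (matmulF W E) 0 := by
    simpa using ((hasDerivAt_id (0 : ℝ)).smul_const (matmulF W E)).const_add (matmulF W U)
  have h2 : HasDerivAt (fun t : ℝ => ℓ x (matmulF W (U + t • E)))
      (fderiv ℝ (ℓ x) (matmulF W U) (matmulF W E)) 0 := by
    have hde' : HasFDerivAt (ℓ x) (fderiv ℝ (ℓ x) (matmulF W U))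
        (matmulF W U + (0:ℝ) • matmulF W E) := by simpa using hde.hasFDerivAt
    have := hde'.comp_hasDerivAt 0 hline2
    have heq : (fun t : ℝ => ℓ x (matmulF W (U + t • E))) =
        ((ℓ x) ∘ fun t : ℝ => matmulF W U + t • matmulF W E) := by
      funext t; simp only [Function.comp_apply]
      rw [matmulF_add_right, matmulF_smul_right]
    rw [heq]
    exact this
  have := h1.unique h2
  rw [this]
  congr 1
  funext r c
  simp [matmulF, hE, Pi.single_apply, apply_ite (fun f : Fin n → ℝ => f c),
    mul_ite, Finset.sum_ite_eq', mul_comm]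

end Grad

section Curve
variable {m k n : ℕ} {X : Type}

def dlt {k : ℕ} (i j : Fin k) : ℝ := if i = j then 1 else 0

def Cm (W : Fin m → Fin k → ℝ) (i j : Fin k) : Fin m → Fin k → ℝ :=
  fun a c => if c = j then W a i else 0

def Rm (U : Fin k → Fin n → ℝ) (i j : Fin k) : Fin k → Fin n → ℝ :=
  fun c b => if c = i then U j b else 0

noncomputable def sc {k : ℕ} (i j : Fin k) (t : ℝ) : ℝ := t / (1 + t * dlt i j)

lemma prod_curve (W : Fin m → Fin k → ℝ) (U : Fin k → Fin n → ℝ) (i j : Fin k)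
    (t : ℝ) (ht : 1 + t * dlt i j ≠ 0) :
    matmulF (W + t • Cm W i j) (U - sc i j t • Rm U i j) = matmulF W U := by
  funext a b
  have hs : t - sc i j t - t * sc i j t * dlt i j = 0 := by
    have h1 : sc i j t * (1 + t * dlt i j) = t := div_mul_cancel₀ t ht
    linear_combination -h1
  simp only [matmulF, Pi.add_apply, Pi.sub_apply, Pi.smul_apply, smul_eq_mul, Cm, Rm]
  have expand : ∀ cc : Fin k, (W a cc + t * (if cc = j then W a i else 0)) *
      (U cc b - sc i j t * (if cc = i then U j b else 0)) =
      W a cc * U cc b + t * ((if cc = j then W a i else 0) * U cc b)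
        - sc i j t * (W a cc * (if cc = i then U j b else 0))
        - t * sc i j t * ((if cc = j then W a i else 0) * (if cc = i then U j b else 0)) := by
    intro cc; ring
  rw [Finset.sum_congr rfl fun cc _ => expand cc, Finset.sum_sub_distrib,
    Finset.sum_sub_distrib, Finset.sum_add_distrib]
  have e1 : ∑ cc, t * ((if cc = j then W a i else 0) * U cc b) = t * (W a i * U j b) := by
    simp [ite_mul, mul_ite, Finset.sum_ite_eq']
  have e2 : ∑ cc, sc i j t * (W a cc * (if cc = i then U j b else 0)) =
      sc i j t * (W a i * U j b) := by
    simp [ite_mul, mul_ite, Finset.sum_ite_eq']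
  have e3 : ∑ cc, t * sc i j t * ((if cc = j then W a i else 0) * (if cc = i then U j b else 0))
      = t * sc i j t * dlt i j * (W a i * U j b) := by
    by_cases h : i = j
    · subst h; simp [dlt, ite_mul, mul_ite, Finset.sum_ite_eq']
    · have h' : ¬ j = i := fun hh => h hh.symm
      simp [dlt, h, h', ite_mul, mul_ite, Finset.sum_ite_eq']
  rw [e1, e2, e3]
  linear_combination (W a i * U j b) * hs

end Curve

section CurveGrad
variable {m k n : ℕ} {X : Type}
variable (ℓ : X → (Fin m → Fin n → ℝ) → ℝ)

lemma gradW_curve (hℓ : ∀ x, ContDiff ℝ 2 (ℓ x)) (x : X)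
    (W : Fin m → Fin k → ℝ) (U : Fin k → Fin n → ℝ) (i j : Fin k)
    (t : ℝ) (ht : 1 + t * dlt i j ≠ 0) (a : Fin m) (b : Fin k) :
    gradW ℓ x (W + t • Cm W i j) (U - sc i j t • Rm U i j) a b
      = gradW ℓ x W U a b - sc i j t * (if b = i then gradW ℓ x W U a j else 0) := by
  have h1 := gradW_eq ℓ hℓ x (W + t • Cm W i j) (U - sc i j t • Rm U i j) a b
  rw [prod_curve W U i j t ht] at h1
  rw [h1]
  by_cases hb : b = i
  · subst hb
    have e : (U - sc b j t • Rm U b j) b = U b - sc b j t • U j := by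
      funext b'; simp [Rm]
    have e2 : Pi.single a (U b - sc b j t • U j)
        = Pi.single (M := fun _ : Fin m => Fin n → ℝ) a (U b)
          - sc b j t • Pi.single (M := fun _ : Fin m => Fin n → ℝ) a (U j) := by
      funext r
      by_cases hr : r = a <;> simp [Pi.single_apply, hr]
    rw [e, e2, map_sub, ContinuousLinearMap.map_smul]
    simp [gradW_eq ℓ hℓ, smul_eq_mul]
  · have e : (U - sc i j t • Rm U i j) b = U b := by
      funext b'; simp [Rm, hb]
    rw [e]
    simp [hb, gradW_eq ℓ hℓ]

lemma gradU_curve (hℓ : ∀ x, ContDiff ℝ 2 (ℓ x)) (x : X)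
    (W : Fin m → Fin k → ℝ) (U : Fin k → Fin n → ℝ) (i j : Fin k)
    (t : ℝ) (ht : 1 + t * dlt i j ≠ 0) (a : Fin k) (b : Fin n) :
    gradU ℓ x (W + t • Cm W i j) (U - sc i j t • Rm U i j) a b
      = gradU ℓ x W U a b + t * (if a = j then gradU ℓ x W U i b else 0) := by
  have h1 := gradU_eq ℓ hℓ x (W + t • Cm W i j) (U - sc i j t • Rm U i j) a b
  rw [prod_curve W U i j t ht] at h1
  rw [h1]
  by_cases ha : a = j
  · subst ha
    have e : (fun r c => (W + t • Cm W i a) r a * (Pi.single b 1 : Fin n → ℝ) c)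
        = (fun r c => W r a * (Pi.single b 1 : Fin n → ℝ) c)
          + t • (fun r c => W r i * (Pi.single b 1 : Fin n → ℝ) c) := by
      funext r c'
      have hC : Cm W i a r a = W r i := if_pos rfl
      simp only [Pi.add_apply, Pi.smul_apply, smul_eq_mul, hC]
      ring
    rw [e, map_add, ContinuousLinearMap.map_smul]
    simp [gradU_eq ℓ hℓ, smul_eq_mul]
  · have e : (fun r c => (W + t • Cm W i j) r a * (Pi.single b 1 : Fin n → ℝ) c)
        = (fun r c => W r a * (Pi.single b 1 : Fin n → ℝ) c) := by
      funext r c'; simp [Cm, ha]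
    rw [e]
    simp [ha, gradU_eq ℓ hℓ]

end CurveGrad

section Helpers
variable {X : Type} [Fintype X]

lemma sum_comb_sub (w f g : X → ℝ) (s : ℝ) :
    ∑ x, w x * (f x - s * g x) = (∑ x, w x * f x) - s * ∑ x, w x * g x := by
  rw [Finset.mul_sum, ← Finset.sum_sub_distrib]
  exact Finset.sum_congr rfl fun x _ => by ring

lemma sum_comb_add (w f g : X → ℝ) (s : ℝ) :
    ∑ x, w x * (f x + s * g x) = (∑ x, w x * f x) + s * ∑ x, w x * g x := by
  rw [Finset.mul_sum, ← Finset.sum_add_distrib]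
  exact Finset.sum_congr rfl fun x _ => by ring

end Helpers

section SCProps
variable {k : ℕ}

lemma sc_zero (i j : Fin k) : sc i j 0 = 0 := by simp [sc]

lemma hasDerivAt_sc (i j : Fin k) : HasDerivAt (sc i j) 1 0 := by
  have h := HasDerivAt.div (hasDerivAt_id (0:ℝ))
    (((hasDerivAt_id (0:ℝ)).mul_const (dlt i j)).const_add 1) (by simp)
  simp at h
  exact h

lemma sc_ne_ev (i j : Fin k) : ∀ᶠ t in nhds (0:ℝ), 1 + t * dlt i j ≠ 0 := by
  have hco : ContinuousAt (fun t : ℝ => 1 + t * dlt i j) 0 := by fun_prop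
  have h1 : (fun t : ℝ => 1 + t * dlt i j) 0 ≠ 0 := by norm_num
  exact hco.eventually_ne h1

lemma continuousAt_curve {m n : ℕ} (W : Fin m → Fin k → ℝ) (U : Fin k → Fin n → ℝ)
    (i j : Fin k) :
    ContinuousAt (fun t : ℝ => (W + t • Cm W i j, U - sc i j t • Rm U i j)) 0 := by
  apply ContinuousAt.prodMk
  · fun_prop
  · have hsc : ContinuousAt (fun t : ℝ => sc i j t) 0 := by
      apply ContinuousAt.div continuousAt_id (by fun_prop) (by norm_num)
    exact continuousAt_const.sub (hsc.smul continuousAt_const)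

lemma curve_zero {m n : ℕ} (W : Fin m → Fin k → ℝ) (U : Fin k → Fin n → ℝ)
    (i j : Fin k) :
    (W + (0:ℝ) • Cm W i j, U - sc i j 0 • Rm U i j) = (W, U) := by
  simp [sc_zero]

end SCProps

/-- If `ℓ(x, W, U) = ℓ̃(x, WU)` and `(W,U)` is a local minimum of the entropic loss with
`γ = 0` (and `η > 0`), then `E[G_Wᵀ G_W] = E[G_U G_Uᵀ]` (gradient balance); if instead
`η = 0` and `γ > 0`, then `WᵀW = UUᵀ` (weight balance). -/
theorem stmt11 {m k n : ℕ} {X B : Type} [Fintype X] [Fintype B]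
    (p : X → ℝ) (hp : ∀ x, 0 ≤ p x) (hp1 : ∑ x, p x = 1)
    (q : B → ℝ) (hq : ∀ b, 0 ≤ q b) (hq1 : ∑ b, q b = 1)
    (c : B → X → ℝ) (hc : ∀ b x, 0 ≤ c b x) (hc1 : ∀ b, ∑ x, c b x = 1)
    (ℓ : X → (Fin m → Fin n → ℝ) → ℝ) (hℓ : ∀ x, ContDiff ℝ 2 (ℓ x))
    (F : ℝ → ℝ → (Fin m → Fin k → ℝ) × (Fin k → Fin n → ℝ) → ℝ)
    (hF : ∀ η γ W U, F η γ (W, U) = (∑ x, p x * ℓ x (matmulF W U))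
      + γ * ((∑ a, ∑ b, (W a b) ^ 2) + (∑ a, ∑ b, (U a b) ^ 2))
      + (η / 4) * ∑ bt, q bt *
          ((∑ a, ∑ b, (∑ x, c bt x * gradW ℓ x W U a b) ^ 2)
            + (∑ a, ∑ b, (∑ x, c bt x * gradU ℓ x W U a b) ^ 2)))
    (W : Fin m → Fin k → ℝ) (U : Fin k → Fin n → ℝ) :
    (∀ η : ℝ, 0 < η → IsLocalMin (F η 0) (W, U) →
      (∑ bt, q bt •
          ((Matrix.of (fun a b => ∑ x, c bt x * gradW ℓ x W U a b))ᵀ *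
              (Matrix.of (fun a b => ∑ x, c bt x * gradW ℓ x W U a b))))
        = ∑ bt, q bt •
            ((Matrix.of (fun a b => ∑ x, c bt x * gradU ℓ x W U a b)) *
              (Matrix.of (fun a b => ∑ x, c bt x * gradU ℓ x W U a b))ᵀ)) ∧
    (∀ γ : ℝ, 0 < γ → IsLocalMin (F 0 γ) (W, U) →
      (Matrix.of W)ᵀ * Matrix.of W = Matrix.of U * (Matrix.of U)ᵀ) := by
  constructor
  · intro η hη hmin
    ext i j
    -- local min along the curve
    have hlm : IsLocalMin
        (fun t : ℝ => F η 0 (W + t • Cm W i j, U - sc i j t • Rm U i j)) 0 := by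
      have hmin' : IsMinFilter (F η 0) (nhds (W, U))
          ((fun t : ℝ => (W + t • Cm W i j, U - sc i j t • Rm U i j)) 0) := by
        show IsMinFilter (F η 0) (nhds (W, U)) ((W + (0:ℝ) • Cm W i j, U - sc i j 0 • Rm U i j))
        rw [curve_zero]; exact hmin
      have htd : Filter.Tendsto
          (fun t : ℝ => (W + t • Cm W i j, U - sc i j t • Rm U i j))
          (nhds 0) (nhds (W, U)) := by
        have := (continuousAt_curve W U i j)
        rwa [ContinuousAt, curve_zero] at this
      exact IsMinFilter.comp_tendsto
        (g := fun t : ℝ => (W + t • Cm W i j, U - sc i j t • Rm U i j)) hmin' htd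
    have hzero : deriv
        (fun t : ℝ => F η 0 (W + t • Cm W i j, U - sc i j t • Rm U i j)) 0 = 0 :=
      hlm.deriv_eq_zero
    -- explicit formula along the curve
    have hfeq : (fun t : ℝ => F η 0 (W + t • Cm W i j, U - sc i j t • Rm U i j))
        =ᶠ[nhds 0] (fun t : ℝ =>
          (∑ x, p x * ℓ x (matmulF W U)) + (η / 4) * ∑ bt, q bt *
            ((∑ a, ∑ b, ((∑ x, c bt x * gradW ℓ x W U a b)
                - sc i j t * (if b = i then ∑ x, c bt x * gradW ℓ x W U a j else 0)) ^ 2)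
              + (∑ a, ∑ b, ((∑ x, c bt x * gradU ℓ x W U a b)
                + t * (if a = j then ∑ x, c bt x * gradU ℓ x W U i b else 0)) ^ 2))) := by
      filter_upwards [sc_ne_ev i j] with t ht
      rw [hF]
      have hgw : ∀ (bt : B) (a : Fin m) (b : Fin k),
          ∑ x, c bt x * gradW ℓ x (W + t • Cm W i j) (U - sc i j t • Rm U i j) a b
            = (∑ x, c bt x * gradW ℓ x W U a b)
              - sc i j t * (if b = i then ∑ x, c bt x * gradW ℓ x W U a j else 0) := by
        intro bt a b
        rw [Finset.sum_congr rfl fun x _ => by rw [gradW_curve ℓ hℓ x W U i j t ht]]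
        by_cases hb : b = i
        · simp only [hb, if_pos rfl]
          exact sum_comb_sub _ _ _ _
        · simp [hb]
      have hgu : ∀ (bt : B) (a : Fin k) (b : Fin n),
          ∑ x, c bt x * gradU ℓ x (W + t • Cm W i j) (U - sc i j t • Rm U i j) a b
            = (∑ x, c bt x * gradU ℓ x W U a b)
              + t * (if a = j then ∑ x, c bt x * gradU ℓ x W U i b else 0) := by
        intro bt a b
        rw [Finset.sum_congr rfl fun x _ => by rw [gradU_curve ℓ hℓ x W U i j t ht]]
        by_cases ha : a = j
        · simp only [ha, if_pos rfl]
          exact sum_comb_add _ _ _ _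
        · simp [ha]
      simp only [hgw, hgu, prod_curve W U i j t ht, zero_mul, add_zero]
    -- derivative of the explicit formula
    have hφd : HasDerivAt (fun t : ℝ =>
          (∑ x, p x * ℓ x (matmulF W U)) + (η / 4) * ∑ bt, q bt *
            ((∑ a, ∑ b, ((∑ x, c bt x * gradW ℓ x W U a b)
                - sc i j t * (if b = i then ∑ x, c bt x * gradW ℓ x W U a j else 0)) ^ 2)
              + (∑ a, ∑ b, ((∑ x, c bt x * gradU ℓ x W U a b)
                + t * (if a = j then ∑ x, c bt x * gradU ℓ x W U i b else 0)) ^ 2)))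
        ((η / 4) * ∑ bt, q bt *
            ((∑ a, ∑ b, -(2 * ((∑ x, c bt x * gradW ℓ x W U a b)
                * (if b = i then ∑ x, c bt x * gradW ℓ x W U a j else 0))))
              + (∑ a, ∑ b, 2 * ((∑ x, c bt x * gradU ℓ x W U a b)
                * (if a = j then ∑ x, c bt x * gradU ℓ x W U i b else 0))))) 0 := by
      apply HasDerivAt.const_add
      apply HasDerivAt.const_mul
      apply HasDerivAt.fun_sum
      intro bt _
      apply HasDerivAt.const_mul
      apply HasDerivAt.add
      · apply HasDerivAt.fun_sum
        intro a _
        apply HasDerivAt.fun_sum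
        intro b _
        have h := (((hasDerivAt_sc i j).mul_const
            (if b = i then ∑ x, c bt x * gradW ℓ x W U a j else 0)).const_sub
            (∑ x, c bt x * gradW ℓ x W U a b)).fun_pow 2
        refine h.congr_deriv ?_
        rw [sc_zero]
        push_cast
        ring
      · apply HasDerivAt.fun_sum
        intro a _
        apply HasDerivAt.fun_sum
        intro b _
        have h := (((hasDerivAt_id (0:ℝ)).mul_const
            (if a = j then ∑ x, c bt x * gradU ℓ x W U i b else 0)).const_add
            (∑ x, c bt x * gradU ℓ x W U a b)).fun_pow 2
        refine h.congr_deriv ?_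
        simp only [id_eq]
        push_cast
        ring
    -- conclude the derivative identity
    have hD : (η / 4) * ∑ bt, q bt *
            ((∑ a, ∑ b, -(2 * ((∑ x, c bt x * gradW ℓ x W U a b)
                * (if b = i then ∑ x, c bt x * gradW ℓ x W U a j else 0))))
              + (∑ a, ∑ b, 2 * ((∑ x, c bt x * gradU ℓ x W U a b)
                * (if a = j then ∑ x, c bt x * gradU ℓ x W U i b else 0)))) = 0 := by
      rw [← hφd.deriv, ← hfeq.deriv_eq, hzero]
    -- simplify the sums
    have e1 : ∀ bt : B, (∑ a, ∑ b, -(2 * ((∑ x, c bt x * gradW ℓ x W U a b)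
          * (if b = i then ∑ x, c bt x * gradW ℓ x W U a j else 0))))
        = -2 * ∑ a, (∑ x, c bt x * gradW ℓ x W U a i) * (∑ x, c bt x * gradW ℓ x W U a j) := by
      intro bt
      rw [Finset.mul_sum]
      refine Finset.sum_congr rfl fun a _ => ?_
      rw [show ∀ gb : Fin k → ℝ, (∑ b, -(2 * (gb b * (if b = i then (∑ x, c bt x * gradW ℓ x W U a j) else 0)))) = -(2 * (gb i * (∑ x, c bt x * gradW ℓ x W U a j))) from fun gb => by
        simp [mul_ite, Finset.sum_ite_eq']]
      ring
    have e2 : ∀ bt : B, (∑ a, ∑ b, 2 * ((∑ x, c bt x * gradU ℓ x W U a b)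
          * (if a = j then ∑ x, c bt x * gradU ℓ x W U i b else 0)))
        = 2 * ∑ b, (∑ x, c bt x * gradU ℓ x W U i b) * (∑ x, c bt x * gradU ℓ x W U j b) := by
      intro bt
      have hinner : ∀ a : Fin k, (∑ b, 2 * ((∑ x, c bt x * gradU ℓ x W U a b)
            * (if a = j then ∑ x, c bt x * gradU ℓ x W U i b else 0)))
          = if a = j then ∑ b, 2 * ((∑ x, c bt x * gradU ℓ x W U a b)
              * (∑ x, c bt x * gradU ℓ x W U i b)) else 0 := by
        intro a
        by_cases ha : a = j <;> simp [ha]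
      rw [Finset.sum_congr rfl fun a _ => hinner a, Finset.sum_ite_eq' Finset.univ j]
      simp only [Finset.mem_univ, if_true]
      rw [Finset.mul_sum]
      exact Finset.sum_congr rfl fun b _ => by ring
    rw [Finset.sum_congr rfl fun bt _ => by rw [e1 bt, e2 bt]] at hD
    have hsplit : ∑ bt, q bt *
        (-2 * (∑ a, (∑ x, c bt x * gradW ℓ x W U a i) * (∑ x, c bt x * gradW ℓ x W U a j))
          + 2 * (∑ b, (∑ x, c bt x * gradU ℓ x W U i b) * (∑ x, c bt x * gradU ℓ x W U j b)))
        = -2 * (∑ bt, q bt * (∑ a, (∑ x, c bt x * gradW ℓ x W U a i) * (∑ x, c bt x * gradW ℓ x W U a j)))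
          + 2 * (∑ bt, q bt * (∑ b, (∑ x, c bt x * gradU ℓ x W U i b) * (∑ x, c bt x * gradU ℓ x W U j b))) := by
      rw [Finset.mul_sum, Finset.mul_sum, ← Finset.sum_add_distrib]
      exact Finset.sum_congr rfl fun bt _ => by ring
    rw [hsplit] at hD
    have hη4 : η / 4 ≠ 0 := by positivity
    have hmain := (mul_eq_zero.mp hD).resolve_left hη4
    -- finish: compute matrix entries
    simp only [Matrix.sum_apply, Matrix.smul_apply, Matrix.mul_apply,
      Matrix.transpose_apply, Matrix.of_apply, smul_eq_mul]
    linarith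
  · intro γ hγ hmin
    ext i j
    have hlm : IsLocalMin
        (fun t : ℝ => F 0 γ (W + t • Cm W i j, U - sc i j t • Rm U i j)) 0 := by
      have hmin' : IsMinFilter (F 0 γ) (nhds (W, U))
          ((fun t : ℝ => (W + t • Cm W i j, U - sc i j t • Rm U i j)) 0) := by
        show IsMinFilter (F 0 γ) (nhds (W, U)) ((W + (0:ℝ) • Cm W i j, U - sc i j 0 • Rm U i j))
        rw [curve_zero]; exact hmin
      have htd : Filter.Tendsto
          (fun t : ℝ => (W + t • Cm W i j, U - sc i j t • Rm U i j))
          (nhds 0) (nhds (W, U)) := by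
        have := (continuousAt_curve W U i j)
        rwa [ContinuousAt, curve_zero] at this
      exact IsMinFilter.comp_tendsto
        (g := fun t : ℝ => (W + t • Cm W i j, U - sc i j t • Rm U i j)) hmin' htd
    have hzero : deriv
        (fun t : ℝ => F 0 γ (W + t • Cm W i j, U - sc i j t • Rm U i j)) 0 = 0 :=
      hlm.deriv_eq_zero
    have hfeq : (fun t : ℝ => F 0 γ (W + t • Cm W i j, U - sc i j t • Rm U i j))
        =ᶠ[nhds 0] (fun t : ℝ =>
          (∑ x, p x * ℓ x (matmulF W U)) + γ *
            ((∑ a, ∑ b, (W a b + t * Cm W i j a b) ^ 2)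
              + (∑ a, ∑ b, (U a b - sc i j t * Rm U i j a b) ^ 2))) := by
      filter_upwards [sc_ne_ev i j] with t ht
      rw [hF]
      simp only [prod_curve W U i j t ht, Pi.add_apply, Pi.smul_apply, smul_eq_mul,
        Pi.sub_apply, zero_div, zero_mul, add_zero]
    have hφd : HasDerivAt (fun t : ℝ =>
          (∑ x, p x * ℓ x (matmulF W U)) + γ *
            ((∑ a, ∑ b, (W a b + t * Cm W i j a b) ^ 2)
              + (∑ a, ∑ b, (U a b - sc i j t * Rm U i j a b) ^ 2)))
        (γ * ((∑ a, ∑ b, 2 * (W a b * Cm W i j a b))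
          + (∑ a, ∑ b, -(2 * (U a b * Rm U i j a b))))) 0 := by
      apply HasDerivAt.const_add
      apply HasDerivAt.const_mul
      apply HasDerivAt.add
      · apply HasDerivAt.fun_sum
        intro a _
        apply HasDerivAt.fun_sum
        intro b _
        have h := (((hasDerivAt_id (0:ℝ)).mul_const (Cm W i j a b)).const_add (W a b)).fun_pow 2
        refine h.congr_deriv ?_
        simp only [id_eq]
        push_cast
        ring
      · apply HasDerivAt.fun_sum
        intro a _
        apply HasDerivAt.fun_sum
        intro b _
        have h := (((hasDerivAt_sc i j).mul_const (Rm U i j a b)).const_sub (U a b)).fun_pow 2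
        refine h.congr_deriv ?_
        rw [sc_zero]
        push_cast
        ring
    have hD : γ * ((∑ a, ∑ b, 2 * (W a b * Cm W i j a b))
          + (∑ a, ∑ b, -(2 * (U a b * Rm U i j a b)))) = 0 := by
      rw [← hφd.deriv, ← hfeq.deriv_eq, hzero]
    have e1 : (∑ a, ∑ b, 2 * (W a b * Cm W i j a b)) = 2 * ∑ a, W a i * W a j := by
      rw [Finset.mul_sum]
      refine Finset.sum_congr rfl fun a _ => ?_
      rw [show (∑ b, 2 * (W a b * Cm W i j a b)) = 2 * (W a j * W a i) from by
        simp [Cm, mul_ite, Finset.sum_ite_eq']]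
      ring
    have e2 : (∑ a, ∑ b, -(2 * (U a b * Rm U i j a b))) = -2 * ∑ b, U i b * U j b := by
      have hinner : ∀ a : Fin k, (∑ b, -(2 * (U a b * Rm U i j a b)))
          = if a = i then ∑ b, -(2 * (U a b * U j b)) else 0 := by
        intro a
        by_cases ha : a = i <;> simp [Rm, ha]
      rw [Finset.sum_congr rfl fun a _ => hinner a, Finset.sum_ite_eq' Finset.univ i]
      simp only [Finset.mem_univ, if_true]
      rw [Finset.mul_sum]
      exact Finset.sum_congr rfl fun b _ => by ring
    rw [e1, e2] at hD
    have hmain := (mul_eq_zero.mp hD).resolve_left (ne_of_gt hγ)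
    simp only [Matrix.mul_apply, Matrix.transpose_apply, Matrix.of_apply]
    linarith
end

section
/- For a two-layer linear factorization constrained by the balance condition UᵀU = WWᵀ and product UW = M (rank d, inner width ≥ d), the quantity Tr[UᵀU] = Tr[WWᵀ] equals the nuclear norm of M, i.e., the sum of singular values of M; moreover ‖U‖_F² = ‖W‖_F² = ‖M‖_* and this is the minimum of max(‖U‖_F², ‖W‖_F²) over all factorizations UW = M. -/
open Matrix Finset

/-- Squared Frobenius norm. -/
def frobSq {m n : ℕ} (M : Matrix (Fin m) (Fin n) ℝ) : ℝ := ∑ i, ∑ j, (M i j) ^ 2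

lemma frobSq_eq_trace {m n : ℕ} (A : Matrix (Fin m) (Fin n) ℝ) :
    frobSq A = (Aᵀ * A).trace := by
  simp only [frobSq, Matrix.trace, Matrix.diag_apply, Matrix.mul_apply,
    Matrix.transpose_apply, sq]
  exact Finset.sum_comm

lemma frobSq_eq_trace' {m n : ℕ} (A : Matrix (Fin m) (Fin n) ℝ) :
    frobSq A = (A * Aᵀ).trace := by
  rw [frobSq_eq_trace, Matrix.trace_mul_comm]

lemma frobSq_nonneg {m n : ℕ} (A : Matrix (Fin m) (Fin n) ℝ) : 0 ≤ frobSq A :=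
  Finset.sum_nonneg fun _ _ => Finset.sum_nonneg fun _ _ => sq_nonneg _

lemma ct_eq {m n : ℕ} (A : Matrix (Fin m) (Fin n) ℝ) : Aᴴ = Aᵀ :=
  Matrix.conjTranspose_eq_transpose_of_trivial A

/-- For balanced factorizations `UW = M` with `UᵀU = WWᵀ` (rank `d`, inner width `k ≥ d`),
`Tr[UᵀU] = Tr[WWᵀ] = ‖U‖_F² = ‖W‖_F²` equals the nuclear norm `Σᵢ sᵢ` of `M`, and this
is the minimum of `max(‖U‖_F², ‖W‖_F²)` over all factorizations `UW = M`. -/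
theorem stmt19 {m n k d : ℕ} (hk : d ≤ k)
    (M : Matrix (Fin m) (Fin n) ℝ) (hrank : M.rank = d)
    (Uh : Matrix (Fin m) (Fin d) ℝ) (s : Fin d → ℝ) (Vh : Matrix (Fin d) (Fin n) ℝ)
    (hs : ∀ i, 0 < s i) (hUh : Uhᵀ * Uh = 1) (hVh : Vh * Vhᵀ = 1)
    (hSVD : M = Uh * Matrix.diagonal s * Vh) :
    (∀ (U : Matrix (Fin m) (Fin k) ℝ) (W : Matrix (Fin k) (Fin n) ℝ),
      Uᵀ * U = W * Wᵀ → U * W = M →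
        (Uᵀ * U).trace = ∑ i, s i ∧ (W * Wᵀ).trace = ∑ i, s i ∧
        frobSq U = ∑ i, s i ∧ frobSq W = ∑ i, s i) ∧
    IsLeast
      {v : ℝ | ∃ (U : Matrix (Fin m) (Fin k) ℝ) (W : Matrix (Fin k) (Fin n) ℝ),
          U * W = M ∧ v = max (frobSq U) (frobSq W)}
      (∑ i, s i) := by
  have hs0 : ∀ i, (0:ℝ) ≤ s i := fun i => (hs i).le
  set R : Matrix (Fin d) (Fin d) ℝ := Matrix.diagonal (fun i => Real.sqrt (s i)) with hR
  have hRt : Rᵀ = R := Matrix.diagonal_transpose _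
  have hRR : R * R = Matrix.diagonal s := by
    rw [hR, Matrix.diagonal_mul_diagonal]
    exact congrArg Matrix.diagonal (funext fun i => Real.mul_self_sqrt (hs0 i))
  have hSsum : (Matrix.diagonal s).trace = ∑ i, s i := Matrix.trace_diagonal s
  have cancelU : ∀ {p : Type} (X : Matrix (Fin d) p ℝ), Uhᵀ * (Uh * X) = X := by
    intro p X; rw [← Matrix.mul_assoc, hUh, Matrix.one_mul]
  have cancelV : ∀ {p : Type} (X : Matrix (Fin d) p ℝ), Vh * (Vhᵀ * X) = X := by
    intro p X; rw [← Matrix.mul_assoc, hVh, Matrix.one_mul]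
  have cancelR : ∀ {p : Type} (X : Matrix (Fin d) p ℝ),
      R * (R * X) = Matrix.diagonal s * X := by
    intro p X; rw [← Matrix.mul_assoc, hRR]
  -- the PSD matrix Vhᵀ S Vh
  set Pd : Matrix (Fin n) (Fin n) ℝ := Vhᵀ * Matrix.diagonal s * Vh with hPd
  have hPdpsd : Pd.PosSemidef := by
    have h := Matrix.posSemidef_conjTranspose_mul_self (R * Vh)
    rw [ct_eq, Matrix.transpose_mul, hRt] at h
    have e : Vhᵀ * R * (R * Vh) = Pd := by
      rw [hPd]; simp only [Matrix.mul_assoc, cancelR]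
    rwa [e] at h
  have hMt : Mᵀ = Vhᵀ * (Matrix.diagonal s * Uhᵀ) := by
    rw [hSVD]
    simp only [Matrix.transpose_mul, Matrix.diagonal_transpose, Matrix.mul_assoc]
  have hMM : Mᵀ * M = Vhᵀ * (Matrix.diagonal s * (Matrix.diagonal s * Vh)) := by
    rw [hMt, hSVD]; simp only [Matrix.mul_assoc, cancelU]
  have hPdsq : Pd ^ 2 = Mᵀ * M := by
    rw [pow_two, hMM, hPd]; simp only [Matrix.mul_assoc, cancelV]
  have hPdtr : Pd.trace = ∑ i, s i := by
    have e : Pd.trace = ((Matrix.diagonal s * Vh) * Vhᵀ).trace := by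
      rw [hPd, Matrix.mul_assoc, Matrix.trace_mul_comm]
    rw [e, Matrix.mul_assoc, hVh, Matrix.mul_one, hSsum]
  constructor
  · -- balanced part
    intro U W hbal hUW
    have hPpsd : (Wᵀ * W).PosSemidef := by
      have := Matrix.posSemidef_conjTranspose_mul_self W
      rwa [ct_eq] at this
    have hPsq : (Wᵀ * W) ^ 2 = Mᵀ * M := by
      rw [pow_two, ← hUW, Matrix.transpose_mul]
      calc Wᵀ * W * (Wᵀ * W) = Wᵀ * (W * Wᵀ) * W := by simp only [Matrix.mul_assoc]
        _ = Wᵀ * (Uᵀ * U) * W := by rw [hbal]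
        _ = Wᵀ * Uᵀ * (U * W) := by simp only [Matrix.mul_assoc]
    have hPeq : Wᵀ * W = Pd := by
      open scoped MatrixOrder Matrix.Norms.L2Operator in
      exact (CFC.sq_eq_sq_iff _ _ hPpsd.nonneg hPdpsd.nonneg).mp (by rw [hPsq, hPdsq])
    have hWtr : (W * Wᵀ).trace = ∑ i, s i := by
      rw [Matrix.trace_mul_comm, hPeq, hPdtr]
    refine ⟨by rw [hbal, hWtr], hWtr, ?_, ?_⟩
    · rw [frobSq_eq_trace, hbal, hWtr]
    · rw [frobSq_eq_trace, Matrix.trace_mul_comm, hWtr]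
  · constructor
    · -- membership: padded balanced factorization
      set E : Matrix (Fin k) (Fin d) ℝ :=
        Matrix.of (fun j i => if j = Fin.castLE hk i then (1:ℝ) else 0) with hE
      have hEE : Eᵀ * E = 1 := by
        ext a b
        simp only [Matrix.mul_apply, Matrix.transpose_apply, hE, Matrix.of_apply,
          ite_mul, one_mul, zero_mul, Finset.sum_ite_eq, Finset.mem_univ, if_true,
          Matrix.one_apply]
        by_cases h : a = b
        · simp [h]
        · have : Fin.castLE hk b ≠ Fin.castLE hk a := by
            simp only [ne_eq, Fin.ext_iff, Fin.coe_castLE]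
            intro hh; exact h (Fin.ext hh.symm)
          simp [h, this]
      have cancelE : ∀ {p : Type} (X : Matrix (Fin d) p ℝ), Eᵀ * (E * X) = X := by
        intro p X; rw [← Matrix.mul_assoc, hEE, Matrix.one_mul]
      refine ⟨Uh * R * Eᵀ, E * R * Vh, ?_, ?_⟩
      · rw [hSVD]; simp only [Matrix.mul_assoc, cancelE, cancelR]
      · have h1 : frobSq (Uh * R * Eᵀ) = ∑ i, s i := by
          have e : (Uh * R * Eᵀ)ᵀ * (Uh * R * Eᵀ) = E * (Matrix.diagonal s * Eᵀ) := by
            simp only [Matrix.transpose_mul, Matrix.transpose_transpose, hRt]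
            simp only [Matrix.mul_assoc, cancelU, cancelR]
          rw [frobSq_eq_trace, e, Matrix.trace_mul_comm, Matrix.mul_assoc, hEE,
            Matrix.mul_one, hSsum]
        have h2 : frobSq (E * R * Vh) = ∑ i, s i := by
          have e : (E * R * Vh)ᵀ * (E * R * Vh) = Vhᵀ * (Matrix.diagonal s * Vh) := by
            simp only [Matrix.transpose_mul, Matrix.transpose_transpose, hRt]
            simp only [Matrix.mul_assoc, cancelE, cancelR]
          rw [frobSq_eq_trace, e, Matrix.trace_mul_comm, Matrix.mul_assoc, hVh,
            Matrix.mul_one, hSsum]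
        rw [h1, h2, max_self]
    · -- lower bound
      rintro v ⟨U, W, hUW, rfl⟩
      set A : Matrix (Fin k) (Fin d) ℝ := Uᵀ * Uh with hA
      set B : Matrix (Fin k) (Fin d) ℝ := W * Vhᵀ with hB
      have hAB : Aᵀ * B = Matrix.diagonal s := by
        have e : Aᵀ * B = Uhᵀ * (U * W * Vhᵀ) := by
          rw [hA, hB]
          simp only [Matrix.transpose_mul, Matrix.transpose_transpose, Matrix.mul_assoc]
        rw [e, hUW, hSVD]
        simp only [Matrix.mul_assoc, cancelU, hVh, Matrix.mul_one]
      have hsum : ∑ i, s i = ∑ p : Fin k × Fin d, A p.1 p.2 * B p.1 p.2 := by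
        have e : (Aᵀ * B).trace = ∑ i, s i := by rw [hAB, hSsum]
        rw [← e]
        simp only [Matrix.trace, Matrix.diag_apply, Matrix.mul_apply, Matrix.transpose_apply]
        rw [Fintype.sum_prod_type]
        exact Finset.sum_comm
      have hfA : frobSq A = ∑ p : Fin k × Fin d, (A p.1 p.2) ^ 2 := by
        simp only [frobSq]; rw [Fintype.sum_prod_type]
      have hfB : frobSq B = ∑ p : Fin k × Fin d, (B p.1 p.2) ^ 2 := by
        simp only [frobSq]; rw [Fintype.sum_prod_type]
      have hCS : (∑ i, s i) ^ 2 ≤ frobSq A * frobSq B := by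
        rw [hsum, hfA, hfB]
        exact Finset.sum_mul_sq_le_sq_mul_sq _ _ _
      -- frobSq A ≤ frobSq U
      have hAU : frobSq A ≤ frobSq U := by
        set Q : Matrix (Fin m) (Fin m) ℝ := 1 - Uh * Uhᵀ with hQ
        have hQt : Qᵀ = Q := by
          simp [hQ, Matrix.transpose_sub, Matrix.transpose_mul]
        have hPP : Uh * Uhᵀ * (Uh * Uhᵀ) = Uh * Uhᵀ := by
          simp only [Matrix.mul_assoc, cancelU]
        have hQQ : Q * Q = Q := by
          rw [hQ, sub_mul, one_mul, mul_sub, mul_one, hPP, sub_self, sub_zero]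
        have hsplit : frobSq A + frobSq (Q * U) = frobSq U := by
          rw [frobSq_eq_trace, frobSq_eq_trace, frobSq_eq_trace]
          have e1 : Aᵀ * A = Uhᵀ * U * (Uᵀ * Uh) := by
            rw [hA]
            simp only [Matrix.transpose_mul, Matrix.transpose_transpose, Matrix.mul_assoc]
          have e2 : (Q * U)ᵀ * (Q * U) = Uᵀ * (Q * U) := by
            rw [Matrix.transpose_mul, hQt, Matrix.mul_assoc, ← Matrix.mul_assoc Q Q U, hQQ]
          rw [e1, e2, Matrix.trace_mul_comm, ← Matrix.trace_add]
          congr 1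
          have e3 : (Uᵀ * Uh) * (Uhᵀ * U) + Uᵀ * (Q * U) = Uᵀ * ((Uh * Uhᵀ + Q) * U) := by
            rw [Matrix.add_mul, Matrix.mul_add]
            congr 1
            simp only [Matrix.mul_assoc]
          have e4 : Uh * Uhᵀ + Q = 1 := by rw [hQ]; abel
          rw [e3, e4, Matrix.one_mul]
        have := frobSq_nonneg (Q * U)
        linarith
      -- frobSq B ≤ frobSq W
      have hBW : frobSq B ≤ frobSq W := by
        set Q : Matrix (Fin n) (Fin n) ℝ := 1 - Vhᵀ * Vh with hQ
        have hQt : Qᵀ = Q := by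
          simp [hQ, Matrix.transpose_sub, Matrix.transpose_mul]
        have hPP : Vhᵀ * Vh * (Vhᵀ * Vh) = Vhᵀ * Vh := by
          simp only [Matrix.mul_assoc, cancelV]
        have hQQ : Q * Q = Q := by
          rw [hQ, sub_mul, one_mul, mul_sub, mul_one, hPP, sub_self, sub_zero]
        have hsplit : frobSq B + frobSq (W * Q) = frobSq W := by
          rw [frobSq_eq_trace', frobSq_eq_trace', frobSq_eq_trace']
          have e1 : B * Bᵀ = W * ((Vhᵀ * Vh) * Wᵀ) := by
            rw [hB]
            simp only [Matrix.transpose_mul, Matrix.transpose_transpose, Matrix.mul_assoc]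
          have e2 : (W * Q) * (W * Q)ᵀ = W * (Q * Wᵀ) := by
            rw [Matrix.transpose_mul, hQt, Matrix.mul_assoc, ← Matrix.mul_assoc Q Q Wᵀ, hQQ]
          rw [e1, e2, ← Matrix.trace_add]
          congr 1
          have e3 : W * ((Vhᵀ * Vh) * Wᵀ) + W * (Q * Wᵀ) = W * ((Vhᵀ * Vh + Q) * Wᵀ) := by
            rw [Matrix.add_mul, Matrix.mul_add]
          have e4 : Vhᵀ * Vh + Q = 1 := by rw [hQ]; abel
          rw [e3, e4, Matrix.one_mul]
        have := frobSq_nonneg (W * Q)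
        linarith
      -- combine
      have hv1 : frobSq U ≤ max (frobSq U) (frobSq W) := le_max_left _ _
      have hv2 : frobSq W ≤ max (frobSq U) (frobSq W) := le_max_right _ _
      have hfu0 : 0 ≤ frobSq U := frobSq_nonneg U
      have hfw0 : 0 ≤ frobSq W := frobSq_nonneg W
      have hfb0 : 0 ≤ frobSq B := frobSq_nonneg B
      have hv0 : 0 ≤ max (frobSq U) (frobSq W) := le_trans hfu0 hv1
      have hss0 : 0 ≤ ∑ i, s i := Finset.sum_nonneg fun i _ => hs0 i
      have hfin : (∑ i, s i) ^ 2 ≤ (max (frobSq U) (frobSq W)) ^ 2 := by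
        calc (∑ i, s i) ^ 2 ≤ frobSq A * frobSq B := hCS
          _ ≤ frobSq U * frobSq W := mul_le_mul hAU hBW hfb0 hfu0
          _ ≤ max (frobSq U) (frobSq W) * max (frobSq U) (frobSq W) :=
              mul_le_mul hv1 hv2 hfw0 hv0
          _ = (max (frobSq U) (frobSq W)) ^ 2 := (sq _).symm
      exact (pow_le_pow_iff_left₀ hss0 hv0 two_ne_zero).mp hfin
end
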